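/- For every real N > 0, the entropy variance of the thermal (geometric) distribution with mean N equals N(N+1) [log₂(1 + 1/N)]²: the series ∑_{n=0}^∞ p_N(n) (−log₂ p_N(n) − g(N))² converges and equals N(N+1) [log₂(1 + 1/N)]². -/

import Mathlib

open Real

/-- The thermal (geometric) distribution on ℕ with mean photon number `N`. -/
noncomputable def thermalDist (N : ℝ) (n : ℕ) : ℝ := (1 / (N + 1)) * (N / (N + 1)) ^ n

/-- `g(N) = (N+1) log₂(N+1) − N log₂ N`, the entropy of the thermal distribution. -/
noncomputable def gFun (N : ℝ) : ℝ := (N + 1) * Real.logb 2 (N + 1) - N * Real.logb 2 N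

lemma choose_two_cast (n : ℕ) : (((n + 2).choose 2 : ℕ) : ℝ) = (n + 2) * (n + 1) / 2 := by
  have h : (n + 2).choose 2 * 2 = (n + 2) * (n + 1) := by
    rw [Nat.choose_two_right]
    have : (n + 2) - 1 = n + 1 := by omega
    rw [this, Nat.div_mul_cancel]
    have := Nat.even_mul_succ_self (n + 1)
    rcases this with ⟨k, hk⟩
    exact ⟨k, by ring_nf; ring_nf at hk; omega⟩
  have := congrArg (fun m : ℕ => (m : ℝ)) h
  push_cast at this ⊢
  linarith

/-- For `N > 0`, the entropy variance of the thermal distribution with mean `N`,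
i.e. the series `∑ₙ p_N(n) (−log₂ p_N(n) − g(N))²`, converges and equals
`N(N+1) [log₂(1 + 1/N)]²`. -/
theorem thermal_entropy_variance (N : ℝ) (hN : 0 < N) :
    HasSum (fun n : ℕ => thermalDist N n * (-(Real.logb 2 (thermalDist N n)) - gFun N) ^ 2)
      (N * (N + 1) * (Real.logb 2 (1 + 1 / N)) ^ 2) := by
  have hN1 : (0:ℝ) < N + 1 := by linarith
  set r : ℝ := N / (N + 1) with hr_def
  set c : ℝ := Real.logb 2 (N + 1) - Real.logb 2 N with hc_def
  have hrpos : 0 < r := div_pos hN hN1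
  have hrlt : r < 1 := (div_lt_one hN1).2 (by linarith)
  have hr : ‖r‖ < 1 := by rw [Real.norm_eq_abs, abs_of_pos hrpos]; exact hrlt
  have h1r : 1 - r = 1 / (N + 1) := by
    rw [hr_def]; field_simp; ring
  -- c is the key log constant
  have hc : Real.logb 2 (1 + 1 / N) = c := by
    rw [hc_def, show (1 : ℝ) + 1 / N = (N + 1) / N by field_simp,
      Real.logb_div (by positivity) hN.ne']
  -- pointwise identity for the log term
  have hlog : ∀ n : ℕ, -(Real.logb 2 (thermalDist N n)) - gFun N = ((n : ℝ) - N) * c := by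
    intro n
    unfold thermalDist gFun
    rw [Real.logb_mul (by positivity) (by positivity), Real.logb_pow,
      one_div, Real.logb_inv, ← hr_def, hr_def,
      Real.logb_div hN.ne' hN1.ne']
    ring
  -- the three geometric sums
  have h2 := hasSum_choose_mul_geometric_of_norm_lt_one (𝕜 := ℝ) 2 hr
  have h1 := hasSum_choose_mul_geometric_of_norm_lt_one (𝕜 := ℝ) 1 hr
  have h0 := hasSum_geometric_of_norm_lt_one hr
  have hcomb := ((h2.mul_left 2).add (h1.mul_left (-(2 * N + 3)))).add
    (h0.mul_left ((N + 1) ^ 2))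
  have hfinal := hcomb.mul_left (c ^ 2 * (1 / (N + 1)))
  convert hfinal using 1
  · rfl
  · funext n
    rw [hlog n]
    unfold thermalDist
    rw [← hr_def, choose_two_cast n, Nat.choose_one_right]
    push_cast
    ring
  · rw [hc, h1r]
    simp only [one_div, inv_pow, inv_inv]
    field_simp
    ring
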